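/- Let $A$, $B$, $C$ be points on the unit circle and $\lambda \ge 4$. Then there exists a point $M$ on the unit circle such that $MA^{\lambda} + MB^{\lambda} + MC^{\lambda} \ge 2 + 2^{\lambda}$. -/

import Mathlib

private lemma bern (u p : ℝ) (hu : 0 ≤ u) (hp : 1 ≤ p) :
    1 + p * (u - 1) ≤ u ^ p := by
  have h := one_add_mul_self_le_rpow_one_add (s := u - 1) (by linarith) hp
  simpa using h

private lemma sq_rpow (x p : ℝ) (hx : 0 ≤ x) : (x ^ 2) ^ (p / 2) = x ^ p := by
  rw [← Real.rpow_natCast x 2, ← Real.rpow_mul hx]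
  congr 1; ring

theorem stmt_6 (A B C : EuclideanSpace ℝ (Fin 2))
    (hA : A ∈ Metric.sphere (0 : EuclideanSpace ℝ (Fin 2)) 1)
    (hB : B ∈ Metric.sphere (0 : EuclideanSpace ℝ (Fin 2)) 1)
    (hC : C ∈ Metric.sphere (0 : EuclideanSpace ℝ (Fin 2)) 1)
    (lam : ℝ) (hlam : 4 ≤ lam) :
    ∃ M ∈ Metric.sphere (0 : EuclideanSpace ℝ (Fin 2)) 1,
      2 + (2 : ℝ) ^ lam ≤ dist M A ^ lam + dist M B ^ lam + dist M C ^ lam := by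
  rw [mem_sphere_zero_iff_norm] at hA hB hC
  set p := ‖A + B‖ with hpdef
  set q := ‖A + C‖ with hqdef
  set r := ‖B + C‖ with hrdef
  have hp0 : 0 ≤ p := norm_nonneg _
  have hq0 : 0 ≤ q := norm_nonneg _
  have hr0 : 0 ≤ r := norm_nonneg _
  -- sum of squares ≥ 3
  have hsq : 3 ≤ p ^ 2 + q ^ 2 + r ^ 2 := by
    have e1 : p ^ 2 = ‖A‖ ^ 2 + 2 * inner ℝ A B + ‖B‖ ^ 2 := by
      rw [hpdef]; exact norm_add_sq_real A B
    have e2 : q ^ 2 = ‖A‖ ^ 2 + 2 * inner ℝ A C + ‖C‖ ^ 2 := by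
      rw [hqdef]; exact norm_add_sq_real A C
    have e3 : r ^ 2 = ‖B‖ ^ 2 + 2 * inner ℝ B C + ‖C‖ ^ 2 := by
      rw [hrdef]; exact norm_add_sq_real B C
    have e4 : ‖A + B + C‖ ^ 2 = ‖A + B‖ ^ 2 + 2 * inner ℝ (A + B) C + ‖C‖ ^ 2 :=
      norm_add_sq_real (A + B) C
    have e5 : (inner ℝ (A + B) C : ℝ) = inner ℝ A C + inner ℝ B C := inner_add_left A B C
    have e6 : (0:ℝ) ≤ ‖A + B + C‖ ^ 2 := sq_nonneg _
    rw [e5, e1] at e4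
    nlinarith [e1, e2, e3]
  -- rpow lower bounds
  have hlam2 : 1 ≤ lam / 2 := by linarith
  have HB : ∀ x : ℝ, 0 ≤ x → 1 + (lam / 2) * (x ^ 2 - 1) ≤ x ^ lam := by
    intro x hx
    have := bern (x ^ 2) (lam / 2) (sq_nonneg x) hlam2
    rwa [sq_rpow x lam hx] at this
  have hP := HB p hp0
  have hQ := HB q hq0
  have hR := HB r hr0
  have hsum : 3 ≤ p ^ lam + q ^ lam + r ^ lam := by nlinarith
  -- distances from antipodes
  have hd2 : ∀ X : EuclideanSpace ℝ (Fin 2), ‖X‖ = 1 → dist (-X) X = 2 := by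
    intro X hX
    rw [dist_eq_norm]
    have : -X - X = -((2:ℝ) • X) := by module
    rw [this, norm_neg, norm_smul]
    simp [hX]
  have hdn : ∀ X Y : EuclideanSpace ℝ (Fin 2), dist (-X) Y = ‖X + Y‖ := by
    intro X Y
    rw [dist_eq_norm]
    have : -X - Y = -(X + Y) := by module
    rw [this, norm_neg]
  have hmem : ∀ X : EuclideanSpace ℝ (Fin 2), ‖X‖ = 1 →
      -X ∈ Metric.sphere (0 : EuclideanSpace ℝ (Fin 2)) 1 := by
    intro X hX
    rw [mem_sphere_zero_iff_norm, norm_neg, hX]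
  have hPn : 0 ≤ p ^ lam := Real.rpow_nonneg hp0 _
  have hQn : 0 ≤ q ^ lam := Real.rpow_nonneg hq0 _
  have hRn : 0 ≤ r ^ lam := Real.rpow_nonneg hr0 _
  rcases le_or_gt 2 (p ^ lam + q ^ lam) with h | h1
  · refine ⟨-A, hmem A hA, ?_⟩
    rw [hd2 A hA, hdn A B, hdn A C, ← hpdef, ← hqdef]
    linarith
  rcases le_or_gt 2 (p ^ lam + r ^ lam) with h | h2
  · refine ⟨-B, hmem B hB, ?_⟩
    have e1 : dist (-B) A = p := by rw [hdn B A, hpdef, add_comm]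
    rw [e1, hd2 B hB, hdn B C, ← hrdef]
    linarith
  refine ⟨-C, hmem C hC, ?_⟩
  have e1 : dist (-C) A = q := by rw [hdn C A, hqdef, add_comm]
  have e2 : dist (-C) B = r := by rw [hdn C B, hrdef, add_comm]
  rw [e1, e2, hd2 C hC]
  linarith
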